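/- Let k ≥ 4 be an integer, set N = (k² + k)/2 and A = (N − k + 1)(k + 1). Suppose B : ℕ → ℕ satisfies B(0) = 0, B(i) = i for 1 ≤ i ≤ N − 1, and B(n) = ∑_{i=1}^k B(n − B(n−i)) for all n with N ≤ n ≤ N + A + k − 2. Then for every integer r with 0 ≤ r ≤ k − 2, one has B(N + A + r) = N + (N − k + 1)k + r − 1. -/
import Mathlib

lemma herm_sum (k : ℕ) : ∀ m : ℕ, ∑ i ∈ Finset.range (k+1), (m - i + k)/(k+1) = m := by
  intro m
  induction m using Nat.strong_induction_on with
  | _ m IH =>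
  by_cases hm : m ≤ k
  · have hcong : ∀ i ∈ Finset.range (k+1), (m - i + k)/(k+1) = if i < m then 1 else 0 := by
      intro i hi
      rw [Finset.mem_range] at hi
      split_ifs with h
      · exact Nat.div_eq_of_lt_le (by omega) (by omega)
      · exact Nat.div_eq_of_lt (by omega)
    rw [Finset.sum_congr rfl hcong]
    rw [Finset.range_eq_Ico, ← Finset.sum_Ico_consecutive _ (Nat.zero_le m) (by omega : m ≤ k+1)]
    have h1 : ∀ i ∈ Finset.Ico 0 m, (if i < m then 1 else 0) = 1 := by
      intro i hi; rw [Finset.mem_Ico] at hi; simp [hi.2]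
    have h2 : ∀ i ∈ Finset.Ico m (k+1), (if i < m then 1 else 0) = 0 := by
      intro i hi; rw [Finset.mem_Ico] at hi; simp; omega
    rw [Finset.sum_congr rfl h1, Finset.sum_congr rfl h2]
    simp
  · have hstep : ∀ i ∈ Finset.range (k+1), (m - i + k)/(k+1) = ((m - (k+1)) - i + k)/(k+1) + 1 := by
      intro i hi
      rw [Finset.mem_range] at hi
      by_cases h : i ≤ m - (k+1)
      · have e : m - i + k = ((m - (k+1)) - i + k) + (k+1) := by omega
        rw [e, Nat.add_div_right _ (by omega)]
      · have e1 : (m - (k+1)) - i = 0 := by omega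
        have e2 : (m - i + k)/(k+1) = 1 := Nat.div_eq_of_lt_le (by omega) (by omega)
        rw [e1, e2, Nat.div_eq_of_lt (by omega)]
    rw [Finset.sum_congr rfl hstep, Finset.sum_add_distrib, IH (m - (k+1)) (by omega)]
    simp; omega

lemma key_lemma (k N A : ℕ) (hk : 4 ≤ k) (h2N : 2 * N = k * (k + 1))
    (hA : A = (N - k + 1) * (k + 1)) (B : ℕ → ℕ)
    (hinit : ∀ i, 1 ≤ i → i ≤ N - 1 → B i = i)
    (hrec : ∀ n, N ≤ n → n ≤ N + A + k - 2 →
      B n = ∑ i ∈ Finset.Icc 1 k, B (n - B (n - i))) :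
    ∀ m, m ≤ A + k - 2 →
      B (N + m) + (m + k)/(k+1) + (if m = A then 1 else 0) = N + m := by
  have hNk : 2*k + 2 ≤ N := by
    have h4 : 4 * (k+1) ≤ k * (k+1) := Nat.mul_le_mul_right _ hk
    rw [← h2N] at h4; omega
  have hA2 : (N - k + 1) * (k+1) = A := hA.symm
  have hA3 : (N - k + 1 + 1) * (k+1) = A + (k+1) := by rw [add_mul, one_mul, hA2]
  have hA4 : (N - k + 1 + 1 + 1) * (k+1) = A + (k+1) + (k+1) := by
    rw [add_mul, one_mul, hA3]
  have hAk : k + 1 ≤ A := by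
    have h := Nat.le_mul_of_pos_left (k+1) (show 0 < N - k + 1 by omega)
    rw [hA2] at h; exact h
  have hins : Finset.range (k+1) = insert 0 (Finset.Icc 1 k) := by
    ext x; simp; omega
  have hgauss : ∑ i ∈ Finset.Icc 1 k, i = N := by
    have h1 : (∑ i ∈ Finset.range (k+1), i) * 2 = (k+1) * k := by
      rw [Finset.sum_range_id_mul_two]; simp
    rw [hins, Finset.sum_insert (by simp)] at h1
    have h3 : (k+1)*k = k*(k+1) := Nat.mul_comm _ _
    rw [h3, ← h2N] at h1
    omega
  intro m
  induction m using Nat.strong_induction_on with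
  | _ m IH =>
  intro hm
  have hBn := hrec (N+m) (by omega) (by omega)
  have hterm : ∀ i ∈ Finset.Icc 1 k,
      B (N + m - B (N + m - i)) + (if A ≤ m ∧ i = k then 1 else 0)
        = i + (m - i + k)/(k+1) + (if A + 1 ≤ m ∧ i = m - A then 1 else 0) := by
    intro i hi
    rw [Finset.mem_Icc] at hi
    obtain ⟨hi1, hik⟩ := hi
    by_cases him : i ≤ m
    · -- i ≤ m
      have hq := IH (m - i) (by omega) (by omega)
      have e : N + m - i = N + (m - i) := by omega
      rw [e]
      have hBN : B N = N := by
        have h0 := IH 0 (by omega) (by omega)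
        rw [if_neg (by omega : ¬ (0:ℕ) = A)] at h0
        rw [Nat.div_eq_of_lt (by omega : 0 + k < k + 1)] at h0
        simp only [Nat.add_zero] at h0
        omega
      have hBsmall : ∀ t, 1 ≤ t → t ≤ N → B t = t := by
        intro t h1 h2
        rcases eq_or_lt_of_le h2 with hEq | hlt
        · rw [hEq]; exact hBN
        · exact hinit t h1 (by omega)
      obtain ⟨d, hd⟩ : ∃ d, (m - i + k)/(k+1) = d := ⟨_, rfl⟩
      rw [hd] at hq ⊢
      by_cases hmA : m - i = A
      · rw [if_pos hmA] at hq
        rw [if_pos (show A + 1 ≤ m ∧ i = m - A by omega)]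
        rw [if_neg (show ¬ (A ≤ m ∧ i = k) by rintro ⟨h1, h2⟩; omega)]
        have hdval : d = N - k + 1 := by
          rw [← hd, hmA]
          exact Nat.div_eq_of_lt_le (by rw [hA2]; omega) (by rw [hA3]; omega)
        have harg : N + m - B (N + (m - i)) = i + d + 1 := by omega
        rw [harg]
        have hik2 : i ≤ k - 2 := by omega
        rw [hBsmall (i + d + 1) (by omega) (by omega)]
      · rw [if_neg hmA] at hq
        rw [if_neg (show ¬ (A + 1 ≤ m ∧ i = m - A) by rintro ⟨h1, h2⟩; omega)]
        have harg : N + m - B (N + (m - i)) = i + d := by omega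
        rw [harg]
        by_cases hcrit : A ≤ m ∧ i = k
        · have hdval : d = N - k + 1 := by
            rw [← hd]
            exact Nat.div_eq_of_lt_le (by rw [hA2]; omega) (by rw [hA3]; omega)
          have hBN1 : B (N + 1) = N := by
            have h1 := IH 1 (by omega) (by omega)
            rw [if_neg (by omega : ¬ (1:ℕ) = A)] at h1
            rw [show (1:ℕ) + k = k + 1 from by omega, Nat.div_self (by omega : 0 < k+1)] at h1
            omega
          rw [show i + d = N + 1 from by omega, hBN1, if_pos hcrit]
        · rw [if_neg hcrit]
          have hdb : i + d ≤ N := by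
            rcases lt_trichotomy (m - i) A with hlt | heq | hgt
            · by_cases hsmall : m - i + k < A
              · have : d < N - k + 1 := by
                  rw [← hd, Nat.div_lt_iff_lt_mul (by omega : 0 < k+1), hA2]
                  omega
                omega
              · have hdval : d = N - k + 1 := by
                  rw [← hd]
                  exact Nat.div_eq_of_lt_le (by rw [hA2]; omega) (by rw [hA3]; omega)
                have hikk : i ≤ k - 1 := by
                  by_contra h; push_neg at h
                  exact hcrit ⟨by omega, by omega⟩
                omega
            · omega
            · have hdval : d = N - k + 1 + 1 := by
                rw [← hd]
                exact Nat.div_eq_of_lt_le (by rw [hA3]; omega) (by rw [hA4]; omega)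
              have : i ≤ k - 3 := by omega
              omega
          rw [hBsmall (i + d) (by omega) hdb]
    · -- m < i
      rw [hinit (N + m - i) (by omega) (by omega)]
      rw [show N + m - (N + m - i) = i from by omega]
      rw [hinit i hi1 (by omega)]
      rw [if_neg (show ¬ (A ≤ m ∧ i = k) by rintro ⟨h1, h2⟩; omega)]
      rw [if_neg (show ¬ (A + 1 ≤ m ∧ i = m - A) by rintro ⟨h1, h2⟩; omega)]
      rw [show m - i = 0 from by omega, Nat.div_eq_of_lt (by omega : 0 + k < k + 1)]
  have hsum := Finset.sum_congr rfl hterm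
  rw [Finset.sum_add_distrib, Finset.sum_add_distrib, Finset.sum_add_distrib] at hsum
  have he1 : (∑ i ∈ Finset.Icc 1 k, if A ≤ m ∧ i = k then (1:ℕ) else 0)
      = if A ≤ m then 1 else 0 := by
    by_cases hAm : A ≤ m
    · simp only [hAm, true_and, if_pos]
      rw [Finset.sum_ite_eq' (Finset.Icc 1 k) k (fun _ => 1)]
      rw [if_pos (Finset.mem_Icc.mpr ⟨by omega, le_refl k⟩)]
    · simp [hAm]
  have he2 : (∑ i ∈ Finset.Icc 1 k, if A + 1 ≤ m ∧ i = m - A then (1:ℕ) else 0)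
      = if A + 1 ≤ m then 1 else 0 := by
    by_cases hAm : A + 1 ≤ m
    · simp only [hAm, true_and, if_pos]
      rw [Finset.sum_ite_eq' (Finset.Icc 1 k) (m - A) (fun _ => 1)]
      rw [if_pos (Finset.mem_Icc.mpr ⟨by omega, by omega⟩)]
    · simp [hAm]
  have hd2 : (∑ i ∈ Finset.Icc 1 k, (m - i + k)/(k+1)) + (m + k)/(k+1) = m := by
    have hh := herm_sum k m
    rw [hins, Finset.sum_insert (by simp)] at hh
    simp only [Nat.sub_zero] at hh
    omega
  rw [he1, he2, hgauss] at hsum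
  rw [hBn]
  obtain ⟨D, hD⟩ : ∃ D, (m + k)/(k+1) = D := ⟨_, rfl⟩
  rw [hD] at hd2 ⊢
  obtain ⟨S, hS⟩ : ∃ S, (∑ i ∈ Finset.Icc 1 k, (m - i + k)/(k+1)) = S := ⟨_, rfl⟩
  rw [hS] at hd2 hsum
  obtain ⟨T, hT⟩ : ∃ T, (∑ i ∈ Finset.Icc 1 k, B (N + m - B (N + m - i))) = T := ⟨_, rfl⟩
  rw [hT] at hsum ⊢
  by_cases h1 : A ≤ m
  · by_cases h2 : A + 1 ≤ m
    · rw [if_neg (by omega : ¬ m = A)]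
      rw [if_pos h1, if_pos h2] at hsum
      omega
    · rw [if_pos (by omega : m = A)]
      rw [if_pos h1, if_neg h2] at hsum
      omega
  · rw [if_neg (by omega : ¬ m = A)]
    rw [if_neg h1, if_neg (by omega : ¬ A + 1 ≤ m)] at hsum
    omega

theorem stmt_14 (k N A : ℕ) (hk : 4 ≤ k) (hN : N = (k ^ 2 + k) / 2)
    (hA : A = (N - k + 1) * (k + 1)) (B : ℕ → ℕ)
    (hB0 : B 0 = 0)
    (hinit : ∀ i, 1 ≤ i → i ≤ N - 1 → B i = i)
    (hrec : ∀ n, N ≤ n → n ≤ N + A + k - 2 →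
      B n = ∑ i ∈ Finset.Icc 1 k, B (n - B (n - i)))
    (r : ℕ) (hr : r ≤ k - 2) :
    B (N + A + r) = N + (N - k + 1) * k + r - 1 := by
  have hdvd : 2 ∣ k^2 + k := by
    have h : k^2 + k = k * (k+1) := by ring
    rw [h]
    exact (Nat.even_mul_succ_self k).two_dvd
  have h2N : 2 * N = k * (k + 1) := by
    calc 2 * N = 2 * ((k^2+k)/2) := by rw [hN]
    _ = k^2 + k := Nat.mul_div_cancel' hdvd
    _ = k * (k+1) := by ring
  have hNk : 2*k + 2 ≤ N := by
    have h4 : 4 * (k+1) ≤ k * (k+1) := Nat.mul_le_mul_right _ hk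
    rw [← h2N] at h4; omega
  have hA2 : (N - k + 1) * (k+1) = A := hA.symm
  have hA3 : (N - k + 1 + 1) * (k+1) = A + (k+1) := by rw [add_mul, one_mul, hA2]
  have hA4 : (N - k + 1 + 1 + 1) * (k+1) = A + (k+1) + (k+1) := by
    rw [add_mul, one_mul, hA3]
  have hkey := key_lemma k N A hk h2N hA B hinit hrec (A + r) (by omega)
  rw [← Nat.add_assoc] at hkey
  have hdiv : (A + r + k)/(k+1) = (N - k + 1) + (if 1 ≤ r then 1 else 0) := by
    by_cases hr1 : 1 ≤ r
    · rw [if_pos hr1]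
      exact Nat.div_eq_of_lt_le (by rw [hA3]; omega) (by rw [hA4]; omega)
    · rw [if_neg hr1]
      exact Nat.div_eq_of_lt_le (by rw [hA2]; omega) (by rw [hA3]; omega)
  rw [hdiv] at hkey
  have hX : A = (N - k + 1) * k + (N - k + 1) := by rw [← hA2, Nat.mul_succ]
  by_cases hr1 : 1 ≤ r
  · rw [if_pos hr1] at hkey
    rw [if_neg (by omega : ¬ A + r = A)] at hkey
    omega
  · rw [if_neg hr1] at hkey
    rw [if_pos (by omega : A + r = A)] at hkey
    omega
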